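/- Let X = ∏_{i∈I} X_i be a product of topological spaces, each of which is a nonsingleton T1 space (more generally, each X_i is the union of two open proper nonempty subsets). If the weight of X is at most |I|, then X has an ω^op-like base; i.e., Nt(X) = ω. -/
import Mathlib


open Cardinal Set

universe u

variable {X : Type u}

/-- `B` is a base for the topology of `X`. -/
def IsBase [TopologicalSpace X] (B : Set (Set X)) : Prop :=
  (∀ U ∈ B, IsOpen U) ∧ ∀ W : Set X, IsOpen W → ∀ p ∈ W, ∃ U ∈ B, p ∈ U ∧ U ⊆ W

/-- `B` is a local base at `p`. -/
def IsLocalBase [TopologicalSpace X] (p : X) (B : Set (Set X)) : Prop :=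
  (∀ U ∈ B, IsOpen U ∧ p ∈ U) ∧ ∀ W : Set X, IsOpen W → p ∈ W → ∃ U ∈ B, U ⊆ W

/-- `B` is a local π-base at `p`. -/
def IsLocalPiBase [TopologicalSpace X] (p : X) (B : Set (Set X)) : Prop :=
  (∀ U ∈ B, IsOpen U ∧ U.Nonempty) ∧ ∀ W : Set X, IsOpen W → p ∈ W → ∃ U ∈ B, U ⊆ W

/-- The weight of `X`: the least infinite cardinal `κ` such that `X` has a base of
cardinality at most `κ`. -/
noncomputable def weight (X : Type u) [TopologicalSpace X] : Cardinal.{u} :=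
  sInf {κ | ℵ₀ ≤ κ ∧ ∃ B : Set (Set X), IsBase B ∧ #B ≤ κ}

/-- The character of `p` in `X`. -/
noncomputable def character [TopologicalSpace X] (p : X) : Cardinal.{u} :=
  sInf {κ | ℵ₀ ≤ κ ∧ ∃ B : Set (Set X), IsLocalBase p B ∧ #B ≤ κ}

/-- The π-character of `p` in `X`. -/
noncomputable def piCharacter [TopologicalSpace X] (p : X) : Cardinal.{u} :=
  sInf {κ | ℵ₀ ≤ κ ∧ ∃ B : Set (Set X), IsLocalPiBase p B ∧ #B ≤ κ}

/-- A family of sets (ordered by `⊆`) is `κ^op`-like if no member is contained in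
`κ`-many members. -/
def IsOpLike {Y : Type u} (B : Set (Set Y)) (κ : Cardinal.{u}) : Prop :=
  ∀ U ∈ B, #{V : Set Y // V ∈ B ∧ U ⊆ V} < κ

/-- The Noetherian type of `X`: the least infinite `κ` such that `X` has a
`κ^op`-like base. -/
noncomputable def Nt (X : Type u) [TopologicalSpace X] : Cardinal.{u} :=
  sInf {κ | ℵ₀ ≤ κ ∧ ∃ B : Set (Set X), IsBase B ∧ IsOpLike B κ}

/-- `⟨F i⟩` is a `⟨#ι, κ⟩`-splitter of `X`: a sequence of finite open covers such
that for every index set `I` of cardinality `κ` and every choice `U i ∈ F i`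
(`i ∈ I`), the interior of `⋂_{i ∈ I} U i` is empty. -/
def IsSplitter [TopologicalSpace X] {ι : Type u} (F : ι → Set (Set X))
    (κ : Cardinal.{u}) : Prop :=
  (∀ i, (F i).Finite ∧ (∀ U ∈ F i, IsOpen U) ∧ ⋃₀ F i = Set.univ) ∧
  ∀ (I : Set ι) (U : ι → Set X), #I = κ → (∀ i ∈ I, U i ∈ F i) →
    interior (⋂ i ∈ I, U i) = ∅

/-- Each factor is the union of two nontrivial open sets; if `w(∏ X i) ≤ |ι|`, then
the product has an `ω^op`-like base, i.e. its Noetherian type is `ω`. -/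
theorem nt_bigProd_eq_aleph0 {ι : Type u} (Y : ι → Type u)
    [∀ i, TopologicalSpace (Y i)]
    (h : ∀ i, ∃ U V : Set (Y i), IsOpen U ∧ IsOpen V ∧ U.Nonempty ∧ V.Nonempty ∧
      U ∪ V = Set.univ ∧ U ≠ Set.univ ∧ V ≠ Set.univ)
    (hw : weight (∀ i, Y i) ≤ #ι) :
    Nt (∀ i, Y i) = ℵ₀ := by

  classical
  choose U V hUo hVo hUn hVn hcov hUp hVp using h
  have hwmem : weight (∀ i, Y i) ∈
      {κ | ℵ₀ ≤ κ ∧ ∃ B : Set (Set (∀ i, Y i)), IsBase B ∧ #B ≤ κ} := by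
    apply csInf_mem
    exact ⟨ℵ₀ ⊔ #{W : Set (∀ i, Y i) | IsOpen W}, le_sup_left,
      {W | IsOpen W}, ⟨fun W hW => hW, fun W hW p hp => ⟨W, hW, hp, subset_rfl⟩⟩,
      le_sup_right⟩
  obtain ⟨-, B, hB, hBcard⟩ := hwmem
  obtain ⟨g⟩ := (Cardinal.le_def _ _).mp (hBcard.trans hw)
  let B' : Set (Set (∀ i, Y i)) :=
    {C | ∃ (b : B) (w : Bool),
      C = (b : Set (∀ i, Y i)) ∩
        (fun p => p (g b)) ⁻¹' (if w then U (g b) else V (g b)) ∧ C.Nonempty}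
  have hopen : ∀ C ∈ B', IsOpen C := by
    rintro C ⟨b, w, rfl, -⟩
    refine (hB.1 _ b.2).inter (IsOpen.preimage (continuous_apply _) ?_)
    cases w <;> simp [hUo, hVo]
  have hbase : IsBase B' := by
    refine ⟨hopen, fun W hW p hp => ?_⟩
    obtain ⟨b, hbB, hpb, hbW⟩ := hB.2 W hW p hp
    have hpu : p (g ⟨b, hbB⟩) ∈ U (g ⟨b, hbB⟩) ∪ V (g ⟨b, hbB⟩) := by
      rw [hcov]; trivial
    cases hpu with
    | inl hU0 =>
      refine ⟨b ∩ (fun q => q (g ⟨b, hbB⟩)) ⁻¹'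
          (if true then U (g ⟨b, hbB⟩) else V (g ⟨b, hbB⟩)),
        ⟨⟨b, hbB⟩, true, rfl, ⟨p, hpb, by simpa using hU0⟩⟩,
        ⟨hpb, by simpa using hU0⟩, Set.inter_subset_left.trans hbW⟩
    | inr hV0 =>
      refine ⟨b ∩ (fun q => q (g ⟨b, hbB⟩)) ⁻¹'
          (if false then U (g ⟨b, hbB⟩) else V (g ⟨b, hbB⟩)),
        ⟨⟨b, hbB⟩, false, rfl, ⟨p, hpb, by simpa using hV0⟩⟩,
        ⟨hpb, by simpa using hV0⟩, Set.inter_subset_left.trans hbW⟩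
  have hoplike : IsOpLike B' ℵ₀ := by
    intro C hC
    have hCopen : IsOpen C := hopen C hC
    obtain ⟨b₀, w₀, hCeq, p, hp⟩ := hC
    obtain ⟨F, u, hu, hsubC⟩ := isOpen_pi_iff.mp hCopen p hp
    set S : Set ι := {i | C ⊆ (fun q => q i) ⁻¹' U i ∨ C ⊆ (fun q => q i) ⁻¹' V i}
      with hSdef
    have hSsub : S ⊆ ↑F := by
      intro i hi
      by_contra hiF
      have key : ∀ W : Set (Y i), W ≠ Set.univ → ¬ C ⊆ (fun q => q i) ⁻¹' W := by
        intro W hWp hsub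
        obtain ⟨x, hx⟩ := (Set.ne_univ_iff_exists_notMem W).mp hWp
        have hq : Function.update p i x ∈ Set.pi ↑F u := by
          intro j hj
          have hji : j ≠ i := fun e => hiF (e ▸ hj)
          rw [Function.update_of_ne hji]
          exact (hu j hj).2
        have hmem := hsub (hsubC hq)
        simp only [Set.mem_preimage, Function.update_self] at hmem
        exact hx hmem
      rcases hi with h1 | h2
      · exact key _ (hUp i) h1
      · exact key _ (hVp i) h2
    have hSfin : S.Finite := F.finite_toSet.subset hSsub
    have hfin : {D | D ∈ B' ∧ C ⊆ D}.Finite := by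
      have hpre : ((fun b : B => g b) ⁻¹' S).Finite :=
        hSfin.preimage (g.injective.injOn)
      refine (((hpre.prod (Set.finite_univ (α := Bool)))).image
        (fun bw : B × Bool => (bw.1 : Set (∀ i, Y i)) ∩
          (fun q => q (g bw.1)) ⁻¹' (if bw.2 then U (g bw.1) else V (g bw.1)))).subset ?_
      rintro D ⟨⟨b, w, rfl, -⟩, hCD⟩
      refine ⟨(b, w), ⟨?_, trivial⟩, rfl⟩
      have hsub : C ⊆ (fun q => q (g b)) ⁻¹' (if w then U (g b) else V (g b)) :=
        hCD.trans Set.inter_subset_right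
      show g b ∈ S
      cases w
      · exact Or.inr (by simpa using hsub)
      · exact Or.inl (by simpa using hsub)
    exact hfin.lt_aleph0
  have hmem : ℵ₀ ∈
      {κ | ℵ₀ ≤ κ ∧ ∃ B : Set (Set (∀ i, Y i)), IsBase B ∧ IsOpLike B κ} :=
    ⟨le_refl _, B', hbase, hoplike⟩
  exact le_antisymm (csInf_le' hmem) (le_csInf ⟨_, hmem⟩ fun κ hκ => hκ.1)
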